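/- Let G be an abelian group and φ : G → G a group endomorphism. Let G_∞ be the direct limit of the sequence G →φ G →φ G →φ ⋯, with structure maps ι_n : G → G_∞ from the n-th copy of G, and let φ_∞ : G_∞ → G_∞ be the unique endomorphism satisfying φ_∞ ∘ ι_n = ι_n ∘ φ for all n. Write ι = ι_1 for the map from the first copy of G. Then ι restricts to a group isomorphism from Ker(id_G − φ) onto Ker(id_{G_∞} − φ_∞). -/

import Mathlib

universe u v

namespace KernelIsoAux

variable {G : Type u} [AddCommGroup G] (φ : G →+ G)

/-- `φ` as an additive monoid endomorphism, so that powers are available. -/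
def E : AddMonoid.End G := φ

/-- The `k`-th iterate of `φ`, as an additive group homomorphism. -/
def Fpow (k : ℕ) : G →+ G := (E φ ^ k : AddMonoid.End G)

theorem Fpow_zero (x : G) : Fpow φ 0 x = x := rfl

theorem Fpow_add (a b : ℕ) (x : G) : Fpow φ a (Fpow φ b x) = Fpow φ (a + b) x := by
  simp only [Fpow, pow_add]; rfl

theorem Fpow_one (x : G) : Fpow φ 1 x = φ x := by simp [Fpow, E]; rfl

theorem Fpow_succ (k : ℕ) (x : G) : Fpow φ (k + 1) x = Fpow φ k (φ x) := by
  simp only [Fpow, pow_succ]; rfl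

theorem Fpow_succ' (k : ℕ) (x : G) : Fpow φ (k + 1) x = φ (Fpow φ k x) := by
  simp only [Fpow, pow_succ']; rfl

theorem Fpow_fixed {a : G} (ha : φ a = a) : ∀ k : ℕ, Fpow φ k a = a := by
  intro k
  induction k with
  | zero => exact Fpow_zero φ a
  | succ k ih => rw [Fpow_succ, ha, ih]

/-- The directed system `G →φ G →φ ⋯` indexed by `ℕ`. -/
def F : ∀ i j : ℕ, i ≤ j → G →+ G := fun i j _ => Fpow φ (j - i)

instance : DirectedSystem (fun _ : ℕ => G) (fun i j h => F φ i j h) where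
  map_self i x := by simp only [F, Nat.sub_self]; exact Fpow_zero φ x
  map_map {k j i} hij hjk x := by
    simp only [F]
    rw [Fpow_add, tsub_add_tsub_cancel hjk hij]

theorem iota_iterate {Glim : Type v} [AddCommGroup Glim] (ι : ℕ → (G →+ Glim))
    (hcocone : ∀ n, ι n = (ι (n + 1)).comp φ) :
    ∀ (k n : ℕ) (x : G), ι n x = ι (n + k) (Fpow φ k x) := by
  intro k
  induction k with
  | zero => intro n x; rw [Fpow_zero]; norm_num
  | succ k ih =>
    intro n x
    have h1 := congrArg (fun f : G →+ Glim => f x) (hcocone n)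
    simp only [AddMonoidHom.comp_apply] at h1
    rw [h1, ih (n + 1) (φ x), ← Fpow_succ]
    have hnk : n + 1 + k = n + (k + 1) := by omega
    rw [hnk]

end KernelIsoAux

open KernelIsoAux in
/-- Let `G` be an abelian group, `φ : G → G` an endomorphism, and let
`Glim` be the direct limit of `G →φ G →φ G →φ ⋯` with structure maps `ι n : G →+ Glim`
(so that `ι n = ι (n+1) ∘ φ`, and `(Glim, ι)` is universal among such cocones), and let
`philim : Glim →+ Glim` be the endomorphism determined by `philim ∘ ι n = ι n ∘ φ` for
all `n`.  Then `ι 0`, the map from the first copy of `G`, restricts to a group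
isomorphism (an additive bijection) from `Ker(id − φ)` onto `Ker(id − philim)`. -/
theorem kernel_iso_of_directLimit {G : Type u} [AddCommGroup G] (φ : G →+ G)
    {Glim : Type v} [AddCommGroup Glim] (ι : ℕ → (G →+ Glim))
    (hcocone : ∀ n, ι n = (ι (n + 1)).comp φ)
    (huniv : ∀ (H : Type (max u v)) [AddCommGroup H] (j : ℕ → (G →+ H)),
      (∀ n, j n = (j (n + 1)).comp φ) → ∃! u : Glim →+ H, ∀ n, u.comp (ι n) = j n)
    (philim : Glim →+ Glim) (hphilim : ∀ n, philim.comp (ι n) = (ι n).comp φ) :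
    Set.BijOn (ι 0)
      ((AddMonoidHom.id G - φ).ker : Set G)
      ((AddMonoidHom.id Glim - philim).ker : Set Glim) := by
  -- mem-ker characterizations
  have memker : ∀ x : G, x ∈ (AddMonoidHom.id G - φ).ker ↔ φ x = x := by
    intro x
    rw [AddMonoidHom.mem_ker, AddMonoidHom.sub_apply, AddMonoidHom.id_apply, sub_eq_zero]
    exact eq_comm
  have memker' : ∀ z : Glim, z ∈ (AddMonoidHom.id Glim - philim).ker ↔ philim z = z := by
    intro z
    rw [AddMonoidHom.mem_ker, AddMonoidHom.sub_apply, AddMonoidHom.id_apply, sub_eq_zero]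
    exact eq_comm
  -- the concrete direct limit
  set L := AddCommGroup.DirectLimit (fun _ : ℕ => G) (F φ) with hL
  -- the comparison map e : Glim →+ L
  have hcompat : ∀ n : ℕ,
      ((AddEquiv.ulift.symm.toAddMonoidHom).comp
        (AddCommGroup.DirectLimit.of (fun _ : ℕ => G) (F φ) n) : G →+ ULift.{v} L)
      = (((AddEquiv.ulift.symm.toAddMonoidHom).comp
        (AddCommGroup.DirectLimit.of (fun _ : ℕ => G) (F φ) (n + 1))).comp φ) := by
    intro n
    ext x
    simp only [AddMonoidHom.comp_apply, AddEquiv.toAddMonoidHom_eq_coe,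
      AddMonoidHom.coe_coe]
    have h2 : F φ n (n + 1) (Nat.le_succ n) x = φ x := by
      simp only [F, Nat.add_sub_cancel_left]
      exact Fpow_one φ x
    have h3 : AddCommGroup.DirectLimit.of (fun _ : ℕ => G) (F φ) n x
        = AddCommGroup.DirectLimit.of (fun _ : ℕ => G) (F φ) (n + 1) (φ x) := by
      rw [← h2]
      exact (AddCommGroup.DirectLimit.of_f (G := fun _ : ℕ => G) (f := F φ)
        (i := n) (j := n + 1) (Nat.le_succ n) x).symm
    rw [h3]
  obtain ⟨uu, huu, -⟩ := huniv (ULift.{v} L)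
    (fun n => (AddEquiv.ulift.symm.toAddMonoidHom).comp
      (AddCommGroup.DirectLimit.of (fun _ : ℕ => G) (F φ) n)) hcompat
  set e : Glim →+ L := (AddEquiv.ulift.toAddMonoidHom).comp uu with he
  have he_iota : ∀ (n : ℕ) (x : G),
      e (ι n x) = AddCommGroup.DirectLimit.of (fun _ : ℕ => G) (F φ) n x := by
    intro n x
    have h1 := congrArg (fun f : G →+ ULift.{v} L => f x) (huu n)
    simp only [AddMonoidHom.comp_apply] at h1
    simp only [he, AddMonoidHom.comp_apply, h1]
    rfl
  -- exactness: ι n a = 0 → φ^k a = 0 for some k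
  have hzero : ∀ (n : ℕ) (a : G), ι n a = 0 →
      ∃ k : ℕ, Fpow φ k a = 0 := by
    intro n a h
    have h0 : AddCommGroup.DirectLimit.of (fun _ : ℕ => G) (F φ) n a = 0 := by
      rw [← he_iota, h, map_zero]
    obtain ⟨j, hij, hj⟩ := AddCommGroup.DirectLimit.of.zero_exact
      (G := fun _ : ℕ => G) (f := F φ) n a h0
    exact ⟨j - n, hj⟩
  -- every element of Glim is in the range of some ι n
  have hsurj_range : ∀ z : Glim, ∃ (n : ℕ) (x : G), ι n x = z := by
    intro z
    set S : AddSubgroup Glim := ⨆ n, (ι n).range with hS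
    have hmemS : ∀ (n : ℕ) (x : G), ι n x ∈ S := fun n x =>
      (le_iSup (fun n => (ι n).range) n) ⟨x, rfl⟩
    -- map into ULift S
    have hcpt : ∀ n : ℕ,
        ((AddEquiv.ulift.symm.toAddMonoidHom).comp
          ((ι n).codRestrict S (fun x => hmemS n x)) : G →+ ULift.{u} S)
        = (((AddEquiv.ulift.symm.toAddMonoidHom).comp
          ((ι (n + 1)).codRestrict S (fun x => hmemS (n + 1) x))).comp φ) := by
      intro n
      ext x
      have h1 := congrArg (fun f : G →+ Glim => f x) (hcocone n)
      simp only [AddMonoidHom.comp_apply] at h1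
      simp only [AddMonoidHom.comp_apply, AddEquiv.toAddMonoidHom_eq_coe,
        AddMonoidHom.coe_coe]
      congr 1
      ext
      simpa [AddMonoidHom.codRestrict] using h1
    obtain ⟨u1, hu1, -⟩ := huniv (ULift.{u} S)
      (fun n => (AddEquiv.ulift.symm.toAddMonoidHom).comp
        ((ι n).codRestrict S (fun x => hmemS n x))) hcpt
    -- uniqueness for the identity cocone
    have hcpt2 : ∀ n : ℕ,
        ((AddEquiv.ulift.symm.toAddMonoidHom).comp (ι n) : G →+ ULift.{u} Glim)
        = (((AddEquiv.ulift.symm.toAddMonoidHom).comp (ι (n + 1))).comp φ) := by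
      intro n
      ext x
      have h1 := congrArg (fun f : G →+ Glim => f x) (hcocone n)
      simp only [AddMonoidHom.comp_apply] at h1
      simp only [AddMonoidHom.comp_apply, AddEquiv.toAddMonoidHom_eq_coe,
        AddMonoidHom.coe_coe]
      exact h1
    obtain ⟨u2, -, hu2uniq⟩ := huniv (ULift.{u} Glim)
      (fun n => (AddEquiv.ulift.symm.toAddMonoidHom).comp (ι n)) hcpt2
    set A : Glim →+ ULift.{u} Glim :=
      (AddEquiv.ulift.symm.toAddMonoidHom).comp (AddMonoidHom.id Glim) with hA
    set B : Glim →+ ULift.{u} Glim :=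
      (AddEquiv.ulift.symm.toAddMonoidHom).comp
        (S.subtype.comp ((AddEquiv.ulift.toAddMonoidHom).comp u1)) with hB
    have hAu : A = u2 := hu2uniq A (by intro n; ext x; simp [hA])
    have hBu : B = u2 := by
      apply hu2uniq
      intro n
      ext x
      have h1 := congrArg (fun f : G →+ ULift.{u} S => f x) (hu1 n)
      simp only [AddMonoidHom.comp_apply] at h1
      simp only [hB, AddMonoidHom.comp_apply, AddEquiv.toAddMonoidHom_eq_coe,
        AddMonoidHom.coe_coe, h1]
      rfl
    have hz : z ∈ S := by
      have hab : A z = B z := by rw [hAu, hBu]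
      have hzz : z = S.subtype (AddEquiv.ulift (u1 z)) := by
        have h2 := congrArg (fun w : ULift.{u} Glim => w.down) hab
        simpa [hA, hB] using h2
      rw [hzz]
      exact (AddEquiv.ulift (u1 z)).2
    -- ranges are directed (monotone)
    have hmono : Monotone (fun n => (ι n).range) := by
      apply monotone_nat_of_le_succ
      intro n w hw
      obtain ⟨x, rfl⟩ := hw
      refine ⟨φ x, ?_⟩
      have h1 := congrArg (fun f : G →+ Glim => f x) (hcocone n)
      simpa using h1.symm
    have h3 := (AddSubgroup.mem_iSup_of_directed (Monotone.directed_le hmono)).mp hz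
    obtain ⟨n, x, hx⟩ := h3
    exact ⟨n, x, hx⟩
  constructor
  · -- MapsTo
    intro x hx
    have hx' : x ∈ (AddMonoidHom.id G - φ).ker := hx
    have hfx : φ x = x := (memker x).mp hx'
    show ι 0 x ∈ (AddMonoidHom.id Glim - philim).ker
    rw [memker']
    have h1 := congrArg (fun f : G →+ Glim => f x) (hphilim 0)
    simp only [AddMonoidHom.comp_apply] at h1
    rw [h1, hfx]
  constructor
  · -- InjOn
    intro x hx y hy hxy
    have hfx : φ x = x := (memker x).mp hx
    have hfy : φ y = y := (memker y).mp hy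
    have h0 : ι 0 (x - y) = 0 := by rw [map_sub, hxy, sub_self]
    obtain ⟨k, hk⟩ := hzero 0 (x - y) h0
    have hfix : φ (x - y) = x - y := by rw [map_sub, hfx, hfy]
    rw [Fpow_fixed φ hfix k] at hk
    exact sub_eq_zero.mp hk
  · -- SurjOn
    intro z hz
    have hz' : z ∈ (AddMonoidHom.id Glim - philim).ker := hz
    have hpz : philim z = z := (memker' z).mp hz'
    obtain ⟨n, x, rfl⟩ := hsurj_range z
    have hphix : ι n (φ x) = ι n x := by
      have h1 := congrArg (fun f : G →+ Glim => f x) (hphilim n)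
      simp only [AddMonoidHom.comp_apply] at h1
      rw [← h1, hpz]
    have h0 : ι n (φ x - x) = 0 := by rw [map_sub, hphix, sub_self]
    obtain ⟨k, hk⟩ := hzero n (φ x - x) h0
    set y := Fpow φ k x with hy
    have hkey : Fpow φ k (φ x) = y := by
      rw [map_sub] at hk
      exact sub_eq_zero.mp hk
    have hfixy : φ y = y := by
      rw [hy, ← Fpow_succ', Fpow_succ, hkey]
    refine ⟨y, (memker y).mpr hfixy, ?_⟩
    show ι 0 y = ι n x
    rw [iota_iterate φ ι hcocone (n + k) 0 y, Fpow_fixed φ hfixy (n + k),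
      iota_iterate φ ι hcocone k n x, ← hy]
    norm_num
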